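/- Let S = {x, y, z, w} ⊂ ℝ² be four points whose convex hull is the triangle xyz, with w in the interior of this triangle. Then w is contained in at least two of the three disks D(x,y), D(y,z), D(x,z). -/

import Mathlib

open Real

/-- The closed disk with diameter segment `ab`. -/
def diskD (a b : EuclideanSpace ℝ (Fin 2)) : Set (EuclideanSpace ℝ (Fin 2)) :=
  Metric.closedBall (midpoint ℝ a b) (dist a b / 2)

private lemma mem_diskD_iff_inner (a b w : EuclideanSpace ℝ (Fin 2)) :
    w ∈ diskD a b ↔ inner ℝ (w - a) (w - b) ≤ (0:ℝ) := by
  have hm : w - midpoint ℝ a b = (1/2 : ℝ) • ((w - a) + (w - b)) := by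
    rw [midpoint_eq_smul_add, invOf_eq_inv]
    module
  have hab : a - b = (w - b) - (w - a) := by abel
  rw [diskD, Metric.mem_closedBall, dist_eq_norm, dist_eq_norm, hm, hab, norm_smul]
  have h0 : ‖(w - b) - (w - a)‖ = ‖(w - a) - (w - b)‖ := norm_sub_rev _ _
  rw [h0, Real.norm_eq_abs, abs_of_pos (by norm_num : (0:ℝ) < 1/2)]
  set u := w - a
  set v := w - b
  have hiff : ‖u + v‖ ≤ ‖u - v‖ ↔ inner ℝ u v ≤ (0:ℝ) := by
    constructor
    · intro h2
      nlinarith [norm_add_sq_real u v, norm_sub_sq_real u v, norm_nonneg (u+v), norm_nonneg (u-v)]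
    · intro hinner
      nlinarith [norm_add_sq_real u v, norm_sub_sq_real u v, norm_nonneg (u+v), norm_nonneg (u-v)]
  constructor
  · intro hle; exact hiff.1 (by linarith)
  · intro hinner; have := hiff.2 hinner; linarith

private lemma two_of_three (a b c iuv ivt iut iuu ivv itt : ℝ)
    (ha : 0 < a) (hb : 0 < b) (hc : 0 < c)
    (huu : 0 ≤ iuu) (hvv : 0 ≤ ivv) (htt : 0 ≤ itt)
    (e1 : a * iuu + b * iuv + c * iut = 0)
    (e2 : a * iuv + b * ivv + c * ivt = 0)
    (e3 : a * iut + b * ivt + c * itt = 0) :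
    (iuv ≤ 0 ∧ ivt ≤ 0) ∨ (ivt ≤ 0 ∧ iut ≤ 0) ∨ (iuv ≤ 0 ∧ iut ≤ 0) := by
  rcases le_or_gt iuv 0 with huv | huv
  · rcases le_or_gt ivt 0 with hvt | hvt
    · exact Or.inl ⟨huv, hvt⟩
    · rcases le_or_gt iut 0 with hut | hut
      · exact Or.inr (Or.inr ⟨huv, hut⟩)
      · exfalso; nlinarith
  · rcases le_or_gt ivt 0 with hvt | hvt
    · rcases le_or_gt iut 0 with hut | hut
      · exact Or.inr (Or.inl ⟨hvt, hut⟩)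
      · exfalso; nlinarith
    · exfalso; nlinarith

/-- A point in the interior of a triangle lies in at least two of the three disks
whose diameters are the sides of the triangle. -/
theorem interior_point_in_two_side_disks
    (x y z w : EuclideanSpace ℝ (Fin 2)) (h : AffineIndependent ℝ ![x, y, z])
    (hw : w ∈ interior (convexHull ℝ ({x, y, z} : Set (EuclideanSpace ℝ (Fin 2))))) :
    (w ∈ diskD x y ∧ w ∈ diskD y z) ∨ (w ∈ diskD y z ∧ w ∈ diskD x z) ∨
      (w ∈ diskD x y ∧ w ∈ diskD x z) := by
  -- Step 1: barycentric representation with strictly positive coefficients.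
  obtain ⟨α, β, γ, hα, hβ, hγ, hsum1, hcomb⟩ :
      ∃ α β γ : ℝ, 0 < α ∧ 0 < β ∧ 0 < γ ∧ α + β + γ = 1 ∧
        α • x + β • y + γ • z = w := by
    have htop : affineSpan ℝ (Set.range ![x, y, z]) = ⊤ := by
      rw [AffineIndependent.affineSpan_eq_top_iff_card_eq_finrank_add_one h]
      simp
    let b : AffineBasis (Fin 3) ℝ (EuclideanSpace ℝ (Fin 2)) := ⟨![x, y, z], h, htop⟩
    have hr : Set.range ![x, y, z] = ({x, y, z} : Set (EuclideanSpace ℝ (Fin 2))) := by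
      ext s
      simp [Fin.exists_fin_succ]
      tauto
    have hb : w ∈ interior (convexHull ℝ (Set.range b)) := by
      show w ∈ interior (convexHull ℝ (Set.range ![x, y, z]))
      rwa [hr]
    rw [b.interior_convexHull] at hb
    have hsum : ∑ i, b.coord i w = 1 := b.sum_coord_apply_eq_one w
    refine ⟨b.coord 0 w, b.coord 1 w, b.coord 2 w, hb 0, hb 1, hb 2, ?_, ?_⟩
    · rw [Fin.sum_univ_three] at hsum; exact hsum
    · have hcomb := b.affineCombination_coord_eq_self w
      rw [Finset.affineCombination_eq_linear_combination _ _ _ hsum] at hcomb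
      rw [Fin.sum_univ_three] at hcomb
      exact hcomb
  -- Step 2: the vectors from w to the vertices, weighted, sum to zero.
  set u := x - w with hu
  set v := y - w with hv
  set t := z - w with ht
  have key : α • u + β • v + γ • t = 0 := by
    have h2 : α • u + β • v + γ • t = (α • x + β • y + γ • z) - (α + β + γ) • w := by
      rw [hu, hv, ht]; module
    rw [h2, hcomb, hsum1, one_smul, sub_self]
  have expand : ∀ s : EuclideanSpace ℝ (Fin 2),
      α * inner ℝ s u + β * inner ℝ s v + γ * inner ℝ s t = (0:ℝ) := by
    intro s
    have h3 : inner ℝ s (α • u + β • v + γ • t) = (0:ℝ) := by rw [key, inner_zero_right]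
    rw [inner_add_right, inner_add_right, real_inner_smul_right, real_inner_smul_right,
      real_inner_smul_right] at h3
    exact h3
  have inu := expand u
  have inv' := expand v
  have int' := expand t
  -- disk memberships in terms of inner products
  have dxy : inner ℝ (w - x) (w - y) = (inner ℝ u v : ℝ) := by
    rw [show w - x = -u by rw [hu]; abel, show w - y = -v by rw [hv]; abel,
      inner_neg_neg]
  have dyz : inner ℝ (w - y) (w - z) = (inner ℝ v t : ℝ) := by
    rw [show w - y = -v by rw [hv]; abel, show w - z = -t by rw [ht]; abel,
      inner_neg_neg]
  have dxz : inner ℝ (w - x) (w - z) = (inner ℝ u t : ℝ) := by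
    rw [show w - x = -u by rw [hu]; abel, show w - z = -t by rw [ht]; abel,
      inner_neg_neg]
  have huu : (0:ℝ) ≤ inner ℝ u u := real_inner_self_nonneg
  have hvv : (0:ℝ) ≤ inner ℝ v v := real_inner_self_nonneg
  have htt : (0:ℝ) ≤ inner ℝ t t := real_inner_self_nonneg
  have suv : (inner ℝ v u : ℝ) = inner ℝ u v := real_inner_comm u v
  have svt : (inner ℝ t v : ℝ) = inner ℝ v t := real_inner_comm v t
  have sut : (inner ℝ t u : ℝ) = inner ℝ u t := real_inner_comm u t
  rw [suv] at inv'
  rw [sut, svt] at int'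
  rw [mem_diskD_iff_inner, mem_diskD_iff_inner, mem_diskD_iff_inner, dxy, dyz, dxz]
  obtain ⟨iuv, huv0⟩ : ∃ r : ℝ, inner ℝ u v = r := ⟨_, rfl⟩
  obtain ⟨ivt, hvt0⟩ : ∃ r : ℝ, inner ℝ v t = r := ⟨_, rfl⟩
  obtain ⟨iut, hut0⟩ : ∃ r : ℝ, inner ℝ u t = r := ⟨_, rfl⟩
  obtain ⟨iuu, huu0⟩ : ∃ r : ℝ, inner ℝ u u = r := ⟨_, rfl⟩
  obtain ⟨ivv, hvv0⟩ : ∃ r : ℝ, inner ℝ v v = r := ⟨_, rfl⟩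
  obtain ⟨itt, htt0⟩ : ∃ r : ℝ, inner ℝ t t = r := ⟨_, rfl⟩
  rw [huv0, hvt0, hut0]
  rw [huv0, hut0, huu0] at inu
  rw [huv0, hvt0, hvv0] at inv'
  rw [hut0, hvt0, htt0] at int'
  rw [huu0] at huu; rw [hvv0] at hvv; rw [htt0] at htt
  exact two_of_three α β γ iuv ivt iut iuu ivv itt hα hβ hγ huu hvv htt inu inv' int'
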